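/- Under within-type exchangeability, for every type i ∈ {1,…,L} and every τ ≥ 0, letting N_i(τ) := #{j : T^{(i)}_j ≤ τ} be the number of failed type-i components by time τ: E[ N_i(τ) · 1{T > τ} ] = Σ_{j_1=0}^{n_1} ⋯ Σ_{j_L=0}^{n_L} j_i · Φ(n_1−j_1, …, n_L−j_L) · (∏_{l=1}^L C(n_l, j_l)) · B(τ; j), where B(τ; j) := P( for each l: T^{(l)}_r ≤ τ for 1 ≤ r ≤ j_l and T^{(l)}_r > τ for j_l < r ≤ n_l ). -/

import Mathlib

open MeasureTheory Finset

/-- The survival signature of a structure function `φ`: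
`Φ(c) = (∏_k C(n_k, c_k))⁻¹ · Σ_{x : exactly c_k working components of each type k} φ(x)`. -/
noncomputable def survSig {L : ℕ} (n : Fin L → ℕ)
    (φ : ((l : Fin L) → Fin (n l) → Bool) → Bool) (c : Fin L → ℕ) : ℝ :=
  (∑ x : (l : Fin L) → Fin (n l) → Bool,
      if (∀ l, (Finset.univ.filter fun j => x l j = true).card = c l) ∧ φ x = true
      then (1 : ℝ) else 0)
    / ∏ l, (Nat.choose (n l) (c l) : ℝ)

lemma exists_perm_bool' {m : ℕ} (x y : Fin m → Bool)
    (h : (univ.filter fun r => x r = true).card = (univ.filter fun r => y r = true).card) :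
    ∃ σ : Equiv.Perm (Fin m), ∀ r, x (σ r) = y r := by
  have h1 : Fintype.card {r // y r = true} = Fintype.card {r // x r = true} := by
    simpa [Fintype.card_subtype] using h.symm
  have h2 : Fintype.card {r // ¬ (y r = true)} = Fintype.card {r // ¬ (x r = true)} := by
    rw [Fintype.card_subtype_compl, Fintype.card_subtype_compl, h1]
  refine ⟨Equiv.subtypeCongr (Fintype.equivOfCardEq h1) (Fintype.equivOfCardEq h2), ?_⟩
  intro r
  by_cases hy : y r = true
  · have e : (Equiv.subtypeCongr (Fintype.equivOfCardEq h1) (Fintype.equivOfCardEq h2)) r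
        = ((Fintype.equivOfCardEq h1) ⟨r, hy⟩ : Fin m) := by
      simp [Equiv.subtypeCongr, hy]
    rw [e, ((Fintype.equivOfCardEq h1) ⟨r, hy⟩).2, hy]
  · have e : (Equiv.subtypeCongr (Fintype.equivOfCardEq h1) (Fintype.equivOfCardEq h2)) r
        = ((Fintype.equivOfCardEq h2) ⟨r, hy⟩ : Fin m) := by
      simp [Equiv.subtypeCongr, hy]
    have hx := ((Fintype.equivOfCardEq h2) ⟨r, hy⟩).2
    rw [Bool.not_eq_true] at hx hy
    rw [e, hx, hy]

lemma card_filter_le_fin (m k : ℕ) :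
    (univ.filter fun r : Fin m => k ≤ (r:ℕ)).card = m - k := by
  have h1 : (univ.filter fun r : Fin m => k ≤ (r:ℕ)).card
      = ((Finset.range m).filter fun r => k ≤ r).card := by
    simp only [Finset.card_filter]
    rw [← Fin.sum_univ_eq_sum_range]
  have h2 : (Finset.range m).filter (fun r => k ≤ r) = Finset.Ico k m := by
    ext r; simp [Finset.mem_Ico, and_comm]
  rw [h1, h2, Nat.card_Ico]


/-- Under within-type exchangeability, with `N_i(τ)` the number of failed
type-`i` components by time `τ`,
`E[N_i(τ)·1{T>τ}] = Σ_j j_i Φ(n−j) (∏_l C(n_l, j_l)) B(τ; j)`, where `B(τ; j)` is the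
probability that exactly the first `j_l` components of each type have failed by `τ`. -/
theorem stmt_9
    {Ω : Type*} [MeasurableSpace Ω] (P : Measure Ω) [IsProbabilityMeasure P]
    {L : ℕ} (hL : 1 ≤ L) (n : Fin L → ℕ) (hn : ∀ l, 1 ≤ n l)
    (T : (l : Fin L) → Fin (n l) → Ω → ℝ)
    (hTmeas : ∀ l j, Measurable (T l j))
    (hexch : ∀ σ : (l : Fin L) → Equiv.Perm (Fin (n l)),
      Measure.map (fun ω (l : Fin L) (j : Fin (n l)) => T l (σ l j) ω) P
        = Measure.map (fun ω (l : Fin L) (j : Fin (n l)) => T l j ω) P)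
    (φ : ((l : Fin L) → Fin (n l) → Bool) → Bool) (hφ : Monotone φ)
    (Tsys : Ω → ℝ) (hTsys : Measurable Tsys)
    (hT : ∀ t : ℝ, 0 ≤ t →
      {ω | t < Tsys ω} = {ω | φ (fun l j => decide (t < T l j ω)) = true})
    (i : Fin L) (τ : ℝ) (hτ : 0 ≤ τ) :
    ∫ ω, (if τ < Tsys ω
        then ((Finset.univ.filter fun j : Fin (n i) => T i j ω ≤ τ).card : ℝ)
        else 0) ∂P
    = ∑ j : (l : Fin L) → Fin (n l + 1),
        (j i : ℝ) * survSig n φ (fun l => n l - (j l : ℕ))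
          * (∏ l, (Nat.choose (n l) (j l) : ℝ))
          * (P {ω | ∀ l, ∀ r : Fin (n l),
              ((r : ℕ) < (j l : ℕ) → T l r ω ≤ τ)
              ∧ ((j l : ℕ) ≤ (r : ℕ) → τ < T l r ω)}).toReal := by
  classical
  -- the state vector at time τ
  set st : Ω → (l : Fin L) → Fin (n l) → Bool :=
    fun ω l j => decide (τ < T l j ω) with hst_def
  -- counts of working components
  set cnt : ((l : Fin L) → Fin (n l) → Bool) → Fin L → ℕ :=
    fun x l => (univ.filter fun r => x l r = true).card with hcnt_def
  have hcnt_le : ∀ x l, cnt x l ≤ n l := by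
    intro x l
    simpa using Finset.card_filter_le univ (fun r : Fin (n l) => x l r = true)
  -- the payoff function
  set g : ((l : Fin L) → Fin (n l) → Bool) → ℝ :=
    fun x => if φ x = true then ((n i - cnt x i : ℕ) : ℝ) else 0 with hg_def
  -- measurability of state events
  have hmeasA : ∀ x : (l : Fin L) → Fin (n l) → Bool,
      MeasurableSet {ω | st ω = x} := by
    intro x
    have : {ω | st ω = x} = ⋂ l, ⋂ r, {ω | st ω l r = x l r} := by
      ext ω
      simp only [Set.mem_setOf_eq, Set.mem_iInter, funext_iff]
    rw [this]
    refine MeasurableSet.iInter fun l => MeasurableSet.iInter fun r => ?_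
    cases hx : x l r
    · have : {ω | st ω l r = false} = {ω | τ < T l r ω}ᶜ := by
        ext ω; simp [hst_def]
      rw [this]
      exact (measurableSet_lt measurable_const (hTmeas l r)).compl
    · have : {ω | st ω l r = true} = {ω | τ < T l r ω} := by
        ext ω; simp [hst_def]
      rw [this]
      exact measurableSet_lt measurable_const (hTmeas l r)
  -- Step 1: write the integrand as a finite sum of indicators
  have hrep : ∀ ω, (if τ < Tsys ω
        then ((Finset.univ.filter fun j : Fin (n i) => T i j ω ≤ τ).card : ℝ)
        else 0)
      = ∑ x : (l : Fin L) → Fin (n l) → Bool,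
          Set.indicator {ω' | st ω' = x} (fun _ => g x) ω := by
    intro ω
    rw [Finset.sum_eq_single (st ω)]
    · rw [Set.indicator_of_mem (by exact rfl : ω ∈ {ω' | st ω' = st ω})]
      have hφω : (τ < Tsys ω) ↔ φ (st ω) = true := by
        have h := Set.ext_iff.mp (hT τ hτ) ω
        exact h
      have hcard : (Finset.univ.filter fun j : Fin (n i) => T i j ω ≤ τ).card
          = n i - cnt (st ω) i := by
        have hsum := Finset.card_filter_add_card_filter_not
          (s := (univ : Finset (Fin (n i)))) (p := fun r => τ < T i r ω)
        have h1 : (univ.filter fun r : Fin (n i) => ¬ (τ < T i r ω))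
            = (univ.filter fun r : Fin (n i) => T i r ω ≤ τ) := by
          apply Finset.filter_congr; intro r _; simp [not_lt]
        have h2 : cnt (st ω) i = (univ.filter fun r : Fin (n i) => τ < T i r ω).card := by
          simp [hcnt_def, hst_def]
        rw [h1] at hsum
        simp only [Finset.card_univ, Fintype.card_fin] at hsum
        omega
      by_cases hts : τ < Tsys ω
      · rw [if_pos hts]
        simp only [hg_def]
        rw [if_pos (hφω.mp hts), hcard]
      · rw [if_neg hts]
        simp only [hg_def]
        rw [if_neg (fun hc => hts (hφω.mpr hc))]
    · intro x _ hne
      exact Set.indicator_of_notMem (fun hmem => hne (Set.mem_setOf_eq ▸ hmem).symm) _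
    · intro h; exact absurd (Finset.mem_univ _) h
  -- integral of the simple function
  have hInt : (∫ ω, (if τ < Tsys ω
        then ((Finset.univ.filter fun j : Fin (n i) => T i j ω ≤ τ).card : ℝ)
        else 0) ∂P)
      = ∑ x : (l : Fin L) → Fin (n l) → Bool, g x * (P {ω | st ω = x}).toReal := by
    calc (∫ ω, (if τ < Tsys ω
        then ((Finset.univ.filter fun j : Fin (n i) => T i j ω ≤ τ).card : ℝ)
        else 0) ∂P)
        = ∫ ω, (∑ x : (l : Fin L) → Fin (n l) → Bool,
            Set.indicator {ω' | st ω' = x} (fun _ => g x) ω) ∂P :=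
          integral_congr_ae (Filter.Eventually.of_forall hrep)
      _ = ∑ x : (l : Fin L) → Fin (n l) → Bool,
            ∫ ω, Set.indicator {ω' | st ω' = x} (fun _ => g x) ω ∂P :=
          integral_finset_sum univ (fun x _ =>
            (integrable_const (g x)).indicator (hmeasA x))
      _ = ∑ x : (l : Fin L) → Fin (n l) → Bool, g x * (P {ω | st ω = x}).toReal := by
          refine Finset.sum_congr rfl fun x _ => ?_
          rw [integral_indicator_const _ (hmeasA x), smul_eq_mul, mul_comm]
          rfl
  -- Step 2: exchangeability: probabilities depend only on counts
  have hexch2 : ∀ x y : (l : Fin L) → Fin (n l) → Bool,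
      (∀ l, cnt x l = cnt y l) → P {ω | st ω = x} = P {ω | st ω = y} := by
    intro x y hc
    choose σ hσ using fun l => exists_perm_bool' (x l) (y l) (hc l)
    set S : Set ((l : Fin L) → Fin (n l) → ℝ) :=
      {t | ∀ l r, decide (τ < t l r) = y l r} with hS_def
    have hSmeas : MeasurableSet S := by
      have : S = ⋂ l, ⋂ r, {t : (l : Fin L) → Fin (n l) → ℝ | decide (τ < t l r) = y l r} := by
        ext t; simp only [hS_def, Set.mem_setOf_eq, Set.mem_iInter]
      rw [this]
      refine MeasurableSet.iInter fun l => MeasurableSet.iInter fun r => ?_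
      have hm : Measurable fun t : (l : Fin L) → Fin (n l) → ℝ => t l r :=
        (measurable_pi_apply r).comp (measurable_pi_apply l)
      cases hyr : y l r
      · have : {t : (l : Fin L) → Fin (n l) → ℝ | decide (τ < t l r) = false}
            = {t : (l : Fin L) → Fin (n l) → ℝ | τ < t l r}ᶜ := by
          ext t; simp
        rw [this]
        exact (measurableSet_lt measurable_const hm).compl
      · have : {t : (l : Fin L) → Fin (n l) → ℝ | decide (τ < t l r) = true}
            = {t : (l : Fin L) → Fin (n l) → ℝ | τ < t l r} := by
          ext t; simp
        rw [this]
        exact measurableSet_lt measurable_const hm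
    have hFmeas : Measurable (fun ω (l : Fin L) (j : Fin (n l)) => T l j ω) :=
      measurable_pi_lambda _ fun l => measurable_pi_lambda _ fun j => hTmeas l j
    have hFσmeas : Measurable (fun ω (l : Fin L) (j : Fin (n l)) => T l (σ l j) ω) :=
      measurable_pi_lambda _ fun l => measurable_pi_lambda _ fun j => hTmeas l (σ l j)
    have happ := congrArg (fun μ : Measure ((l : Fin L) → Fin (n l) → ℝ) => μ S) (hexch σ)
    rw [Measure.map_apply hFσmeas hSmeas, Measure.map_apply hFmeas hSmeas] at happ
    have hpre1 : (fun ω (l : Fin L) (j : Fin (n l)) => T l j ω) ⁻¹' S = {ω | st ω = y} := by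
      ext ω
      simp only [Set.mem_preimage, Set.mem_setOf_eq, hS_def]
      constructor
      · intro h; funext l r; exact h l r
      · intro h l r; exact congrFun (congrFun h l) r
    have hpre2 : (fun ω (l : Fin L) (j : Fin (n l)) => T l (σ l j) ω) ⁻¹' S = {ω | st ω = x} := by
      ext ω
      simp only [Set.mem_preimage, Set.mem_setOf_eq, hS_def]
      constructor
      · intro h; funext l r
        have h2 := h l ((σ l).symm r)
        simp only [Equiv.apply_symm_apply] at h2
        have h4 := hσ l ((σ l).symm r)
        simp only [Equiv.apply_symm_apply] at h4
        exact h2.trans h4.symm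
      · intro h l r
        exact (congrFun (congrFun h l) (σ l r)).trans (hσ l r)
    rw [hpre1, hpre2] at happ
    exact happ
  -- canonical state for a failure-count vector
  set canon : ((l : Fin L) → Fin (n l + 1)) → (l : Fin L) → Fin (n l) → Bool :=
    fun j l r => decide ((j l : ℕ) ≤ (r : ℕ)) with hcanon_def
  have hcnt_canon : ∀ j l, cnt (canon j) l = n l - (j l : ℕ) := by
    intro j l
    simp only [hcnt_def, hcanon_def, decide_eq_true_eq]
    exact card_filter_le_fin (n l) (j l : ℕ)
  have hB : ∀ j : (l : Fin L) → Fin (n l + 1),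
      {ω | ∀ l, ∀ r : Fin (n l),
          ((r : ℕ) < (j l : ℕ) → T l r ω ≤ τ)
          ∧ ((j l : ℕ) ≤ (r : ℕ) → τ < T l r ω)} = {ω | st ω = canon j} := by
    intro j
    ext ω
    simp only [Set.mem_setOf_eq]
    constructor
    · intro h; funext l r
      rcases lt_or_ge (r : ℕ) (j l : ℕ) with hr | hr
      · have h1 := (h l r).1 hr
        simp [hst_def, hcanon_def, not_lt.mpr h1, Nat.not_le.mpr hr]
      · have h1 := (h l r).2 hr
        simp [hst_def, hcanon_def, h1, hr]
    · intro h l r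
      have hr := congrFun (congrFun h l) r
      simp only [hst_def, hcanon_def] at hr
      constructor
      · intro hlt
        have : decide ((j l : ℕ) ≤ (r : ℕ)) = false := by
          simp [Nat.not_le.mpr hlt]
        rw [this] at hr
        simpa [not_lt] using of_decide_eq_false hr
      · intro hle
        have : decide ((j l : ℕ) ≤ (r : ℕ)) = true := by simp [hle]
        rw [this] at hr
        exact of_decide_eq_true hr
  -- key : the failure-count vector of a state
  set key : ((l : Fin L) → Fin (n l) → Bool) → (l : Fin L) → Fin (n l + 1) :=
    fun x l => ⟨n l - cnt x l, by have := hcnt_le x l; omega⟩ with hkey_def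
  have hPx : ∀ x, P {ω | st ω = x} = P {ω | st ω = canon (key x)} := by
    intro x
    refine hexch2 x (canon (key x)) fun l => ?_
    rw [hcnt_canon]
    simp only [hkey_def]
    have := hcnt_le x l
    omega
  -- Step 3: survival signature times binomials equals the count of good states
  have hsig : ∀ j : (l : Fin L) → Fin (n l + 1),
      survSig n φ (fun l => n l - (j l : ℕ)) * (∏ l, ((n l).choose (j l : ℕ) : ℝ))
      = ∑ x : (l : Fin L) → Fin (n l) → Bool,
          if (∀ l, cnt x l = n l - (j l : ℕ)) ∧ φ x = true then (1:ℝ) else 0 := by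
    intro j
    unfold survSig
    have hd : (∏ l, ((n l).choose (n l - (j l : ℕ)) : ℝ))
        = ∏ l, ((n l).choose (j l : ℕ) : ℝ) := by
      refine Finset.prod_congr rfl fun l _ => ?_
      norm_cast
      exact Nat.choose_symm (Fin.is_le (j l))
    rw [hd, div_mul_cancel₀]
    refine Finset.prod_ne_zero_iff.mpr fun l _ => ?_
    have h0 : 0 < (n l).choose (j l : ℕ) := Nat.choose_pos (Fin.is_le (j l))
    exact_mod_cast h0.ne'
  -- collapsing the sum over failure-count vectors
  have hcollapse : ∀ x : (l : Fin L) → Fin (n l) → Bool,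
      (∑ j : (l : Fin L) → Fin (n l + 1),
          (if (∀ l, cnt x l = n l - (j l : ℕ)) ∧ φ x = true then (1:ℝ) else 0)
            * ((j i : ℝ) * (P {ω | st ω = canon j}).toReal))
      = (if φ x = true then (1:ℝ) else 0)
          * ((key x i : ℝ) * (P {ω | st ω = canon (key x)}).toReal) := by
    intro x
    rw [Finset.sum_eq_single (key x)]
    · congr 1
      have hc : ∀ l, cnt x l = n l - ((key x l : ℕ)) := fun l => by
        simp only [hkey_def]; have := hcnt_le x l; omega
      by_cases hx : φ x = true
      · rw [if_pos ⟨hc, hx⟩, if_pos hx]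
      · rw [if_neg (fun hcc => hx hcc.2), if_neg hx]
    · intro j _ hne
      rw [if_neg, zero_mul]
      rintro ⟨hcc, -⟩
      apply hne
      funext l
      refine Fin.ext ?_
      have h1 := hcc l
      have h2 := hcnt_le x l
      have h3 : (j l : ℕ) ≤ n l := Fin.is_le (j l)
      simp only [hkey_def]
      omega
    · intro h; exact absurd (Finset.mem_univ _) h
  -- conclusion
  rw [hInt]
  calc ∑ x : (l : Fin L) → Fin (n l) → Bool, g x * (P {ω | st ω = x}).toReal
      = ∑ x : (l : Fin L) → Fin (n l) → Bool,
          (if φ x = true then (1:ℝ) else 0)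
            * ((key x i : ℝ) * (P {ω | st ω = canon (key x)}).toReal) := by
        refine Finset.sum_congr rfl fun x _ => ?_
        rw [hPx x]
        by_cases hx : φ x = true
        · simp only [hg_def, hkey_def, hx, if_true, one_mul, ← mul_assoc]
        · simp [hg_def, hx]
    _ = ∑ x : (l : Fin L) → Fin (n l) → Bool,
          ∑ j : (l : Fin L) → Fin (n l + 1),
          (if (∀ l, cnt x l = n l - (j l : ℕ)) ∧ φ x = true then (1:ℝ) else 0)
            * ((j i : ℝ) * (P {ω | st ω = canon j}).toReal) := by
        refine Finset.sum_congr rfl fun x _ => (hcollapse x).symm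
    _ = ∑ j : (l : Fin L) → Fin (n l + 1),
          ∑ x : (l : Fin L) → Fin (n l) → Bool,
          (if (∀ l, cnt x l = n l - (j l : ℕ)) ∧ φ x = true then (1:ℝ) else 0)
            * ((j i : ℝ) * (P {ω | st ω = canon j}).toReal) := Finset.sum_comm
    _ = ∑ j : (l : Fin L) → Fin (n l + 1),
        (j i : ℝ) * survSig n φ (fun l => n l - (j l : ℕ))
          * (∏ l, (Nat.choose (n l) (j l) : ℝ))
          * (P {ω | ∀ l, ∀ r : Fin (n l),
              ((r : ℕ) < (j l : ℕ) → T l r ω ≤ τ)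
              ∧ ((j l : ℕ) ≤ (r : ℕ) → τ < T l r ω)}).toReal := by
        refine Finset.sum_congr rfl fun j _ => ?_
        rw [hB j, ← Finset.sum_mul, ← hsig j]
        ring
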